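/- arXiv:2103.02214 — 2 statements merged into one kernel-verified Lean document; each statement's English description precedes it below -/
import Mathlib

section
/- The Determinant Mutual Information DMI(X;Y) = |det(U_{X,Y})| is information-monotone: if X' is conditionally independent of Y given X, then |det(U_{X',Y})| ≤ |det(U_{X,Y})|. -/
open scoped BigOperators

lemma abs_det_le_one_of_col_stochastic {n : ℕ} (T : Matrix (Fin n) (Fin n) ℝ)
    (h0 : ∀ i j, 0 ≤ T i j) (h1 : ∀ j, ∑ i, T i j = 1) : |T.det| ≤ 1 := by
  rw [Matrix.det_apply]
  calc |∑ σ : Equiv.Perm (Fin n), Equiv.Perm.sign σ • ∏ i, T (σ i) i|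
      ≤ ∑ σ : Equiv.Perm (Fin n), |Equiv.Perm.sign σ • ∏ i, T (σ i) i| :=
        Finset.abs_sum_le_sum_abs _ _
    _ = ∑ σ : Equiv.Perm (Fin n), ∏ i, T (σ i) i := by
        refine Finset.sum_congr rfl fun σ _ => ?_
        rcases Int.units_eq_one_or (Equiv.Perm.sign σ) with h | h <;>
          simp [h, abs_of_nonneg, Finset.prod_nonneg fun i _ => h0 _ _]
    _ = ∑ f ∈ Finset.univ.image (fun σ : Equiv.Perm (Fin n) => ⇑σ),
          ∏ i, T (f i) i := by
        rw [Finset.sum_image]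
        intro x _ y _ h
        exact Equiv.coe_fn_injective h
    _ ≤ ∑ f : Fin n → Fin n, ∏ i, T (f i) i :=
        Finset.sum_le_sum_of_subset_of_nonneg (Finset.subset_univ _)
          (fun f _ _ => Finset.prod_nonneg fun i _ => h0 _ _)
    _ = ∏ i, ∑ a, T a i := by
        rw [Finset.prod_univ_sum, Fintype.piFinset_univ]
    _ = 1 := by simp [h1]

/-- Determinant Mutual Information is information-monotone: if `X'` is
conditionally independent of `Y` given `X` (joint pmf `p` of `(X', X, Y)` on a
common size-`C` signal set), then `|det U_{X',Y}| ≤ |det U_{X,Y}|`. -/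
theorem DMI_information_monotone {C : ℕ}
    (p : Fin C → Fin C → Fin C → ℝ)
    (hnn : ∀ a x y, 0 ≤ p a x y)
    (hsum : ∑ a, ∑ x, ∑ y, p a x y = 1)
    (hci : ∀ a x y,
      p a x y * (∑ b, ∑ c, p b x c) = (∑ c, p a x c) * (∑ b, p b x y)) :
    |(Matrix.of fun a y => ∑ x, p a x y).det| ≤
      |(Matrix.of fun x y => ∑ a, p a x y).det| := by
  set q : Fin C → ℝ := fun x => ∑ b, ∑ c, p b x c with hq
  set T : Matrix (Fin C) (Fin C) ℝ :=
    Matrix.of (fun a x => if q x = 0 then (if a = x then (1:ℝ) else 0)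
      else (∑ c, p a x c) / q x) with hT
  have hqnn : ∀ x, 0 ≤ q x :=
    fun x => Finset.sum_nonneg fun b _ => Finset.sum_nonneg fun c _ => hnn _ _ _
  have hpz : ∀ x, q x = 0 → ∀ a y, p a x y = 0 := by
    intro x hx a y
    have h1 := (Finset.sum_eq_zero_iff_of_nonneg
      (fun b _ => Finset.sum_nonneg fun c _ => hnn _ _ _)).mp hx a (Finset.mem_univ a)
    exact (Finset.sum_eq_zero_iff_of_nonneg (fun c _ => hnn _ _ _)).mp h1 y
      (Finset.mem_univ y)
  have hT0 : ∀ a x, 0 ≤ T a x := by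
    intro a x
    simp only [hT, Matrix.of_apply]
    split_ifs with h1 h2
    · norm_num
    · norm_num
    · exact div_nonneg (Finset.sum_nonneg fun c _ => hnn _ _ _) (hqnn x)
  have hT1 : ∀ x, ∑ a, T a x = 1 := by
    intro x
    simp only [hT, Matrix.of_apply]
    by_cases h : q x = 0
    · simp [h]
    · simp only [h, if_false]
      rw [← Finset.sum_div, div_eq_one_iff_eq h]
  have key : (Matrix.of fun a y => ∑ x, p a x y) =
      T * (Matrix.of fun x y => ∑ a, p a x y) := by
    ext a y
    simp only [Matrix.mul_apply, Matrix.of_apply, hT]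
    refine (Finset.sum_congr rfl fun x _ => ?_).symm
    by_cases h : q x = 0
    · simp only [h, if_true]
      rw [hpz x h a y]
      have : ∑ b, p b x y = 0 := Finset.sum_eq_zero fun b _ => hpz x h b y
      rw [this, mul_zero]
    · simp only [h, if_false, div_mul_eq_mul_div]
      rw [← hci a x y, mul_div_assoc, div_self h, mul_one]
  rw [key, Matrix.det_mul, abs_mul]
  calc |T.det| * |(Matrix.of fun x y => ∑ a, p a x y).det|
      ≤ 1 * |(Matrix.of fun x y => ∑ a, p a x y).det| :=
        mul_le_mul_of_nonneg_right (abs_det_le_one_of_col_stochastic T hT0 hT1)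
          (abs_nonneg _)
    _ = _ := one_mul _
end

section
/- Let U and U⋆ be C×C joint distribution matrices with unequal column-sum vectors, and set α_{ij} = α·u⋆_{ij}. Then the integral of the Dirichlet-type density w^α(x) = (1/C(α))·∏_{ij} x_{ij}^{α_{ij}−1} over the slice of joint distributions with the same column sums as U is at most ∏_j (u_j/u⋆_j)^{α·u⋆_j − 1}, where u_j, u⋆_j are the j-th column sums of U, U⋆; since ∏_j (u_j/u⋆_j)^{u⋆_j} < 1 when the column-sum vectors differ, this bound tends to 0 as α → ∞. -/
open MeasureTheory Filter
open scoped ENNReal BigOperators Topology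

noncomputable section

variable {C : ℕ}

def IsJointDist (U : Matrix (Fin C) (Fin C) ℝ) : Prop :=
  (∀ i j, 0 ≤ U i j) ∧ ∑ i, ∑ j, U i j = 1

/-- The entry map of a vectorized matrix in Euclidean space. -/
def entry (v : EuclideanSpace ℝ (Fin C × Fin C)) (i j : Fin C) : ℝ :=
  EuclideanSpace.equiv (Fin C × Fin C) ℝ v (i, j)

/-- `sliceSet U`: vectorized joint distribution matrices with the same column sums
as `U`. -/
def sliceSet (U : Matrix (Fin C) (Fin C) ℝ) : Set (EuclideanSpace ℝ (Fin C × Fin C)) :=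
  {v | (∀ i j, 0 ≤ entry v i j) ∧ (∑ i, ∑ j, entry v i j = 1) ∧
    ∀ j, ∑ i, entry v i j = ∑ i, U i j}

/-- The unnormalized Dirichlet-type density `∏_{ij} x_{ij}^{α·u⋆_{ij} − 1}`. -/
def dirDensity (Ustar : Matrix (Fin C) (Fin C) ℝ) (α : ℝ)
    (v : EuclideanSpace ℝ (Fin C × Fin C)) : ℝ :=
  ∏ i, ∏ j, entry v i j ^ (α * Ustar i j - 1)


open Module Submodule Set

abbrev EmatX (C : ℕ) := EuclideanSpace ℝ (Fin C × Fin C)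
def ELX (C : ℕ) : EmatX C ≃L[ℝ] ((Fin C × Fin C) → ℝ) := EuclideanSpace.equiv _ ℝ
def entryX (v : EmatX C) (i j : Fin C) : ℝ := ELX C v (i, j)
def mkVX (f : (Fin C × Fin C) → ℝ) : EmatX C := (ELX C).symm f

@[simp] lemma entryX_mkVX (f : (Fin C × Fin C) → ℝ) (i j : Fin C) :
    entryX (mkVX f) i j = f (i,j) := by simp [entryX, mkVX]

lemma entryX_sub (v w : EmatX C) (i j : Fin C) :
    entryX (v - w) i j = entryX v i j - entryX w i j := by simp [entryX]

def colSumPiX (C : ℕ) : ((Fin C × Fin C) → ℝ) →ₗ[ℝ] (Fin C → ℝ) where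
  toFun f := fun j => ∑ i, f (i, j)
  map_add' f g := by funext j; simp [Finset.sum_add_distrib]
  map_smul' a f := by funext j; simp [Finset.mul_sum]

def LX (C : ℕ) : EmatX C →ₗ[ℝ] (Fin C → ℝ) :=
  (colSumPiX C).comp ((ELX C).toLinearEquiv : EmatX C →ₗ[ℝ] ((Fin C × Fin C) → ℝ))

@[simp] lemma LX_apply (v : EmatX C) (j : Fin C) : LX C v j = ∑ i, entryX v i j := rfl

def VX (C : ℕ) : Submodule ℝ (EmatX C) := LinearMap.ker (LX C)

lemma mem_VX {v : EmatX C} : v ∈ VX C ↔ ∀ j, ∑ i, entryX v i j = 0 := by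
  simp [VX, LinearMap.mem_ker, funext_iff]

def piScaleX (c : Fin C → ℝ) : ((Fin C × Fin C) → ℝ) →ₗ[ℝ] ((Fin C × Fin C) → ℝ) where
  toFun f := fun q => c q.2 * f q
  map_add' f g := by funext q; simp [mul_add]
  map_smul' a f := by funext q; simp; ring

def colScaleX (c : Fin C → ℝ) : EmatX C →ₗ[ℝ] EmatX C :=
  (((ELX C).symm.toLinearEquiv : ((Fin C × Fin C) → ℝ) →ₗ[ℝ] EmatX C).comp
    (piScaleX c)).comp ((ELX C).toLinearEquiv : EmatX C →ₗ[ℝ] ((Fin C × Fin C) → ℝ))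

@[simp] lemma entryX_colScaleX (c : Fin C → ℝ) (v : EmatX C) (i j : Fin C) :
    entryX (colScaleX c v) i j = c j * entryX v i j := by
  have h1 : colScaleX c v = mkVX (fun q => c q.2 * entryX v q.1 q.2) := rfl
  rw [h1, entryX_mkVX]

lemma colScaleX_mem_VX (c : Fin C → ℝ) : ∀ v ∈ VX C, colScaleX c v ∈ VX C := by
  intro v hv
  rw [mem_VX] at hv ⊢
  intro j
  simp only [entryX_colScaleX, ← Finset.mul_sum, hv j, mul_zero]

lemma EmatX_ext {v w : EmatX C} (h : ∀ i j, entryX v i j = entryX w i j) : v = w := by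
  apply (ELX C).injective
  funext q
  exact h q.1 q.2

lemma colScaleX_colScaleX (b c : Fin C → ℝ) (h : ∀ j, b j * c j = 1) (v : EmatX C) :
    colScaleX b (colScaleX c v) = v := by
  apply EmatX_ext
  intro i j
  rw [entryX_colScaleX, entryX_colScaleX, ← mul_assoc, h, one_mul]

-- basis material
def rowEmbX (k : Fin (C - 1)) : Fin C := ⟨k.1 + 1, by omega⟩
def row0X (hC : 0 < C) : Fin C := ⟨0, hC⟩

def bfunX (hC : 0 < C) (jk : Fin C × Fin (C-1)) : (Fin C × Fin C) → ℝ :=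
  fun q => (if q = (rowEmbX jk.2, jk.1) then (1:ℝ) else 0) - (if q = (row0X hC, jk.1) then 1 else 0)

lemma bvecX_mem (hC : 0 < C) (jk : Fin C × Fin (C-1)) : mkVX (bfunX hC jk) ∈ VX C := by
  rw [mem_VX]
  intro j
  simp only [entryX_mkVX, bfunX, Finset.sum_sub_distrib, Prod.mk.injEq]
  by_cases hj : j = jk.1 <;> simp [hj]

def bVX (hC : 0 < C) (jk : Fin C × Fin (C-1)) : VX C := ⟨mkVX (bfunX hC jk), bvecX_mem hC jk⟩

lemma LX_surjective (hC : 0 < C) : Function.Surjective (LX C) := by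
  intro y
  refine ⟨mkVX (fun q => y q.2 / C), ?_⟩
  funext j
  rw [LX_apply]
  simp only [entryX_mkVX]
  rw [Finset.sum_const, Finset.card_univ, Fintype.card_fin, nsmul_eq_mul]
  field_simp

lemma mulpred (C : ℕ) : C * C = C * (C-1) + C := by
  cases C with
  | zero => simp
  | succ n => simp [Nat.succ_sub_one]; ring

lemma finrank_VX (hC : 0 < C) : finrank ℝ (VX C) = C * (C - 1) := by
  have h1 := LinearMap.finrank_range_add_finrank_ker (LX C)
  rw [LinearMap.range_eq_top.mpr (LX_surjective hC), finrank_top] at h1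
  have h2 : finrank ℝ (EmatX C) = C * C := by
    rw [finrank_euclideanSpace]
    simp [Fintype.card_prod]
  have h3 : finrank ℝ (Fin C → ℝ) = C := by simp
  have := mulpred C
  rw [h2, h3] at h1
  unfold VX
  omega

lemma rowEmbX_ne_row0X (hC : 0 < C) (k : Fin (C-1)) : rowEmbX k ≠ row0X hC := by
  simp only [rowEmbX, row0X, Ne, Fin.mk.injEq]
  omega

lemma rowEmbX_injective : Function.Injective (rowEmbX (C := C)) := by
  intro a b h
  simp only [rowEmbX, Fin.mk.injEq] at h
  exact Fin.ext (by omega)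

lemma bVX_indep (hC : 0 < C) : LinearIndependent ℝ (bVX hC) := by
  rw [linearIndependent_iff']
  intro s g hsum jk hjk
  set φ : VX C →ₗ[ℝ] ℝ :=
    ((LinearMap.proj ((rowEmbX jk.2, jk.1) : Fin C × Fin C) :
        ((Fin C × Fin C) → ℝ) →ₗ[ℝ] ℝ).comp
      ((ELX C).toLinearEquiv : EmatX C →ₗ[ℝ] ((Fin C × Fin C) → ℝ))).comp (VX C).subtype with hφ
  have hφb : ∀ jk' : Fin C × Fin (C-1), φ (bVX hC jk') = if jk' = jk then 1 else 0 := by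
    intro jk'
    have : φ (bVX hC jk') = entryX (mkVX (bfunX hC jk')) (rowEmbX jk.2) jk.1 := rfl
    rw [this, entryX_mkVX, bfunX]
    have h2 : ((rowEmbX jk.2, jk.1) : Fin C × Fin C) ≠ (row0X hC, jk'.1) := by
      intro h; exact rowEmbX_ne_row0X hC jk.2 (congrArg Prod.fst h)
    rw [if_neg h2, sub_zero]
    by_cases h : jk' = jk
    · subst h; simp
    · rw [if_neg]
      · simp [h]
      · intro hcon
        rw [Prod.mk.injEq] at hcon
        exact h (Prod.ext hcon.2.symm (rowEmbX_injective hcon.1).symm)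
  have h0 := congrArg φ hsum
  rw [map_sum, map_zero] at h0
  simp only [_root_.map_smul, hφb, smul_eq_mul, mul_ite, mul_one, mul_zero] at h0
  rw [Finset.sum_ite_eq' s jk g, if_pos hjk] at h0
  exact h0

def basisVX (hC : 2 ≤ C) : Basis (Fin C × Fin (C-1)) ℝ (VX C) :=
  haveI : Nonempty (Fin C × Fin (C-1)) := ⟨(⟨0, by omega⟩, ⟨0, by omega⟩)⟩
  basisOfLinearIndependentOfCardEqFinrank (bVX_indep (by omega))
    (by rw [finrank_VX (by omega)]; simp [Fintype.card_prod])

lemma basisVX_apply (hC : 2 ≤ C) (jk : Fin C × Fin (C-1)) :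
    basisVX hC jk = bVX (by omega) jk := by
  haveI : Nonempty (Fin C × Fin (C-1)) := ⟨(⟨0, by omega⟩, ⟨0, by omega⟩)⟩
  exact congrFun (coe_basisOfLinearIndependentOfCardEqFinrank _ _) jk

lemma det_colScaleX_restrict (hC : 2 ≤ C) (c : Fin C → ℝ) :
    LinearMap.det ((colScaleX c).restrict (colScaleX_mem_VX c)) = ∏ j, c j ^ (C - 1) := by
  rw [← LinearMap.det_toMatrix (basisVX hC)]
  have hM : LinearMap.toMatrix (basisVX hC) (basisVX hC) ((colScaleX c).restrict (colScaleX_mem_VX c))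
      = Matrix.diagonal (fun jk : Fin C × Fin (C-1) => c jk.1) := by
    ext x y
    rw [LinearMap.toMatrix_apply]
    have hscale : (colScaleX c).restrict (colScaleX_mem_VX c) (basisVX hC y) = c y.1 • basisVX hC y := by
      apply Subtype.ext
      rw [basisVX_apply, SetLike.val_smul]
      show colScaleX c (mkVX (bfunX _ y)) = c y.1 • (mkVX (bfunX _ y))
      apply EmatX_ext
      intro i j
      rw [entryX_colScaleX]
      have hsm : entryX (c y.1 • (mkVX (bfunX (show 0 < C by omega) y))) i j
          = c y.1 * entryX (mkVX (bfunX (show 0 < C by omega) y)) i j := by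
        simp [entryX, _root_.map_smul]
      rw [hsm, entryX_mkVX]
      by_cases hj : j = y.1
      · subst hj; rfl
      · have hz : bfunX (show 0 < C by omega) y (i, j) = 0 := by
          rw [bfunX, if_neg (fun h => hj (congrArg Prod.snd h)),
            if_neg (fun h => hj (congrArg Prod.snd h)), sub_zero]
        rw [hz, mul_zero, mul_zero]
    rw [hscale, _root_.map_smul, Basis.repr_self]
    rw [Matrix.diagonal_apply]
    by_cases h : x = y
    · subst h; simp
    · simp [Finsupp.single_apply, h, Ne.symm h]
  rw [hM, Matrix.det_diagonal]
  rw [Fintype.prod_prod_type]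
  simp [Finset.prod_const]

def chartX (W : Submodule ℝ (EmatX C)) (p : EmatX C) (w : W) : EmatX C := p + (w : EmatX C)

lemma chartX_isometry (W : Submodule ℝ (EmatX C)) (p : EmatX C) : Isometry (chartX W p) := by
  apply Isometry.of_dist_eq
  intro a b
  simp only [chartX, dist_add_left]
  rfl

lemma range_chartX (W : Submodule ℝ (EmatX C)) (p : EmatX C) :
    Set.range (chartX W p) = {v | v - p ∈ W} := by
  ext v
  constructor
  · rintro ⟨w, rfl⟩
    simpa [chartX] using w.2
  · intro hv
    exact ⟨⟨v - p, hv⟩, by simp [chartX]⟩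

lemma measurableSet_range_chartX (W : Submodule ℝ (EmatX C)) (p : EmatX C) :
    MeasurableSet (Set.range (chartX W p)) := by
  rw [range_chartX]
  have : IsClosed {v : EmatX C | v - p ∈ W} :=
    IsClosed.preimage (continuous_id.sub continuous_const) W.closed_of_finiteDimensional
  exact this.measurableSet

lemma chartX_continuous (W : Submodule ℝ (EmatX C)) (p : EmatX C) : Continuous (chartX W p) :=
  (chartX_isometry W p).continuous

lemma chartX_lintegral (W : Submodule ℝ (EmatX C)) (p : EmatX C) {d : ℝ} (hd : 0 ≤ d)
    {f : EmatX C → ℝ≥0∞} (hf : Measurable f) {s : Set (EmatX C)} (hs : MeasurableSet s)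
    (hsub : s ⊆ Set.range (chartX W p)) :
    ∫⁻ v in s, f v ∂μH[d] = ∫⁻ w in chartX W p ⁻¹' s, f (chartX W p w) ∂(μH[d] : Measure W) := by
  have hmap := (chartX_isometry W p).map_hausdorffMeasure (Or.inl hd)
  have hcm : Measurable (chartX W p) := (chartX_continuous W p).measurable
  have h1 : (μH[d] : Measure (EmatX C)).restrict s
      = Measure.map (chartX W p) ((μH[d] : Measure W).restrict (chartX W p ⁻¹' s)) := by
    rw [← Measure.restrict_map hcm hs, hmap, Measure.restrict_restrict hs,
      Set.inter_eq_left.mpr hsub]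
  rw [show (∫⁻ v in s, f v ∂μH[d]) = ∫⁻ v, f v ∂((μH[d] : Measure (EmatX C)).restrict s) from rfl,
    h1, lintegral_map hf hcm]

-- ## slice lemmas
section Slice
open Matrix

lemma continuous_entryX (i j : Fin C) : Continuous fun v : EmatX C => entryX v i j :=
  (continuous_apply ((i,j) : Fin C × Fin C)).comp (ELX C).continuous

def sliceSetX (U : Matrix (Fin C) (Fin C) ℝ) : Set (EmatX C) :=
  {v | (∀ i j, 0 ≤ entryX v i j) ∧ (∑ i, ∑ j, entryX v i j = 1) ∧
    ∀ j, ∑ i, entryX v i j = ∑ i, U i j}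

lemma measurableSet_sliceSetX (U : Matrix (Fin C) (Fin C) ℝ) :
    MeasurableSet (sliceSetX U) := by
  have h1 : sliceSetX U = (⋂ i, ⋂ j, {v : EmatX C | 0 ≤ entryX v i j}) ∩
      ({v : EmatX C | ∑ i, ∑ j, entryX v i j = 1} ∩
        ⋂ j, {v : EmatX C | ∑ i, entryX v i j = ∑ i, U i j}) := by
    ext v; simp [sliceSetX, Set.mem_iInter]
  rw [h1]
  have hc : ∀ i j : Fin C, Continuous fun v : EmatX C => entryX v i j := continuous_entryX
  refine MeasurableSet.inter ?_ (MeasurableSet.inter ?_ ?_)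
  · exact MeasurableSet.iInter fun i => MeasurableSet.iInter fun j =>
      (isClosed_le continuous_const (hc i j)).measurableSet
  · exact (isClosed_eq (by continuity) continuous_const).measurableSet
  · exact MeasurableSet.iInter fun j =>
      (isClosed_eq (by continuity) continuous_const).measurableSet

lemma colScaleX_mem_sliceSetX {A B : Matrix (Fin C) (Fin C) ℝ} (b : Fin C → ℝ)
    (hb : ∀ j, 0 ≤ b j) (hAB : ∀ j, b j * (∑ i, A i j) = ∑ i, B i j)
    (hB1 : ∑ i, ∑ j, B i j = 1) :
    ∀ v ∈ sliceSetX A, colScaleX b v ∈ sliceSetX B := by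
  rintro v ⟨h0, h1, h2⟩
  refine ⟨fun i j => ?_, ?_, fun j => ?_⟩
  · rw [entryX_colScaleX]; exact mul_nonneg (hb j) (h0 i j)
  · have hswap : ∑ i, ∑ j, entryX (colScaleX b v) i j = ∑ j, ∑ i, b j * entryX v i j := by
      rw [Finset.sum_comm]
      exact Finset.sum_congr rfl fun j _ => Finset.sum_congr rfl fun i _ => entryX_colScaleX ..
    rw [hswap]
    have h5 : ∀ j : Fin C, ∑ i, b j * entryX v i j = ∑ i, B i j := by
      intro j; rw [← Finset.mul_sum, h2 j, hAB j]
    rw [Finset.sum_congr rfl fun j _ => h5 j, Finset.sum_comm, hB1]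
  · simp only [entryX_colScaleX]
    rw [← Finset.mul_sum, h2 j, hAB j]

end Slice

-- ## rank bound for degenerate columns
def rowProjX (C : ℕ) (j₀ : Fin C) : EmatX C →ₗ[ℝ] (Fin C → ℝ) :=
  (LinearMap.pi (fun i : Fin C => LinearMap.proj ((i, j₀) : Fin C × Fin C))).comp
    ((ELX C).toLinearEquiv : EmatX C →ₗ[ℝ] ((Fin C × Fin C) → ℝ))

@[simp] lemma rowProjX_apply (j₀ : Fin C) (v : EmatX C) (i : Fin C) :
    rowProjX C j₀ v i = entryX v i j₀ := rfl

def JX (C : ℕ) (j₀ : Fin C) : EmatX C →ₗ[ℝ] ((Fin C → ℝ) × (Fin C → ℝ)) :=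
  (LX C).prod (rowProjX C j₀)

lemma finrank_ker_JX_lt (hC : 2 ≤ C) (j₀ : Fin C) :
    finrank ℝ (LinearMap.ker (JX C j₀)) < C * (C - 1) := by
  have h1 := LinearMap.finrank_range_add_finrank_ker (JX C j₀)
  have h2 : finrank ℝ (EmatX C) = C * C := by
    rw [finrank_euclideanSpace]; simp [Fintype.card_prod]
  rw [h2] at h1
  set R : ((Fin C → ℝ) × (Fin C → ℝ)) →ₗ[ℝ] ((Fin C → ℝ) × ℝ) :=
    (LinearMap.fst ℝ (Fin C → ℝ) (Fin C → ℝ)).prod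
      ((LinearMap.proj (⟨1, by omega⟩ : Fin C)).comp (LinearMap.snd ℝ (Fin C → ℝ) (Fin C → ℝ)))
    with hR
  have hsurj : Function.Surjective (R.comp (JX C j₀)) := by
    rintro ⟨y, t⟩
    set i1 : Fin C := ⟨1, by omega⟩ with hi1
    set i0 : Fin C := ⟨0, by omega⟩ with hi0
    have hne : i1 ≠ i0 := by simp [hi1, hi0, Fin.ext_iff]
    set vv : EmatX C := mkVX (fun q =>
      if q.2 = j₀ then (if q.1 = i1 then t else if q.1 = i0 then y j₀ - t else 0)
      else if q.1 = i0 then y q.2 else 0) with hvv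
    refine ⟨vv, Prod.ext ?_ ?_⟩
    · show LX C vv = y
      funext j
      rw [LX_apply, hvv]
      simp only [entryX_mkVX]
      by_cases hj : j = j₀
      · have hv : ∀ i : Fin C,
            (if j = j₀ then (if i = i1 then t else if i = i0 then y j₀ - t else 0)
              else if i = i0 then y j else 0)
            = (if i = i1 then t else 0) + (if i = i0 then y j₀ - t else 0) := by
          intro i
          rw [if_pos hj]
          by_cases h1 : i = i1
          · rw [if_pos h1, if_pos h1, if_neg (by rw [h1]; exact hne), add_zero]
          · rw [if_neg h1, if_neg h1, zero_add]
        rw [Finset.sum_congr rfl fun i _ => hv i, Finset.sum_add_distrib,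
          Finset.sum_ite_eq' Finset.univ i1 (fun _ => t),
          Finset.sum_ite_eq' Finset.univ i0 (fun _ => y j₀ - t)]
        simp only [Finset.mem_univ, if_pos]
        rw [hj]; ring
      · rw [Finset.sum_congr rfl fun i _ => if_neg hj,
          Finset.sum_ite_eq' Finset.univ i0 (fun _ => y j)]
        simp
    · show entryX vv i1 j₀ = t
      rw [hvv]
      simp only [entryX_mkVX]
      simp
  have h3 : finrank ℝ ((Fin C → ℝ) × ℝ) ≤ finrank ℝ (LinearMap.range (JX C j₀)) := by
    have e1 : LinearMap.range (R.comp (JX C j₀)) = ⊤ := LinearMap.range_eq_top.mpr hsurj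
    have e2 : LinearMap.range (R.comp (JX C j₀)) = Submodule.map R (LinearMap.range (JX C j₀)) :=
      LinearMap.range_comp _ _
    calc finrank ℝ ((Fin C → ℝ) × ℝ) = finrank ℝ (LinearMap.range (R.comp (JX C j₀))) := by
          rw [e1, finrank_top]
      _ = finrank ℝ (Submodule.map R (LinearMap.range (JX C j₀))) := by rw [e2]
      _ ≤ finrank ℝ (LinearMap.range (JX C j₀)) := Submodule.finrank_map_le R _
  have h4 : finrank ℝ ((Fin C → ℝ) × ℝ) = C + 1 := by simp
  rw [h4] at h3
  have := mulpred C
  omega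

-- ## density
def dirDensityX (Ustar : Matrix (Fin C) (Fin C) ℝ) (α : ℝ) (v : EmatX C) : ℝ :=
  ∏ i, ∏ j, entryX v i j ^ (α * Ustar i j - 1)

lemma measurable_gX (A : Matrix (Fin C) (Fin C) ℝ) (α z : ℝ) :
    Measurable fun v : EmatX C => ENNReal.ofReal (z * dirDensityX A α v) := by
  apply Measurable.ennreal_ofReal
  apply Measurable.const_mul
  apply Finset.measurable_prod _ fun i _ => ?_
  apply Finset.measurable_prod _ fun j _ => ?_
  exact Measurable.pow (continuous_entryX i j).measurable measurable_const

lemma dirDensityX_colScaleX (Ustar : Matrix (Fin C) (Fin C) ℝ) (α : ℝ) (b : Fin C → ℝ)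
    (hb : ∀ j, 0 < b j) (v : EmatX C) (hv : ∀ i j, 0 ≤ entryX v i j) :
    dirDensityX Ustar α (colScaleX b v)
      = (∏ j, b j ^ (α * (∑ i, Ustar i j) - (C:ℝ))) * dirDensityX Ustar α v := by
  unfold dirDensityX
  have h1 : ∀ i j : Fin C, entryX (colScaleX b v) i j ^ (α * Ustar i j - 1)
      = b j ^ (α * Ustar i j - 1) * entryX v i j ^ (α * Ustar i j - 1) := by
    intro i j; rw [entryX_colScaleX, Real.mul_rpow (hb j).le (hv i j)]
  calc ∏ i, ∏ j, entryX (colScaleX b v) i j ^ (α * Ustar i j - 1)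
      = ∏ i, ∏ j, (b j ^ (α * Ustar i j - 1) * entryX v i j ^ (α * Ustar i j - 1)) :=
        Finset.prod_congr rfl fun i _ => Finset.prod_congr rfl fun j _ => h1 i j
    _ = (∏ i, ∏ j, b j ^ (α * Ustar i j - 1)) * ∏ i, ∏ j, entryX v i j ^ (α * Ustar i j - 1) := by
        rw [← Finset.prod_mul_distrib]
        exact Finset.prod_congr rfl fun i _ => Finset.prod_mul_distrib
    _ = (∏ j, b j ^ (α * (∑ i, Ustar i j) - (C:ℝ))) * ∏ i, ∏ j, entryX v i j ^ (α * Ustar i j - 1) := by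
        congr 1
        rw [Finset.prod_comm]
        refine Finset.prod_congr rfl fun j _ => ?_
        rw [← Real.rpow_sum_of_pos (hb j)]
        congr 1
        rw [Finset.sum_sub_distrib, ← Finset.mul_sum]
        simp

-- ## the tendsto part
lemma tendsto_bound_aux {C : ℕ} (u us : Fin C → ℝ) (hu0 : ∀ j, 0 ≤ u j) (hus : ∀ j, 0 < us j)
    (hu1 : ∑ j, u j = 1) (hus1 : ∑ j, us j = 1) (hne : u ≠ us) :
    Filter.Tendsto (fun α : ℝ => ∏ j, (u j / us j) ^ (α * us j - 1))
      Filter.atTop (nhds 0) := by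
  by_cases hall : ∀ j, 0 < u j
  · set L0 : ℝ := ∑ j, us j * Real.log (u j / us j) with hL0
    set S : ℝ := ∑ j, Real.log (u j / us j) with hS
    have hr : ∀ j, 0 < u j / us j := fun j => div_pos (hall j) (hus j)
    obtain ⟨j₁, hj₁⟩ : ∃ j, u j ≠ us j := by
      by_contra h; push_neg at h; exact hne (funext h)
    have hL0neg : L0 < 0 := by
      have hle : ∀ j ∈ Finset.univ, us j * Real.log (u j / us j) ≤ u j - us j := by
        intro j _
        have hlog := Real.log_le_sub_one_of_pos (hr j)
        calc us j * Real.log (u j / us j) ≤ us j * (u j / us j - 1) :=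
              mul_le_mul_of_nonneg_left hlog (hus j).le
          _ = u j - us j := by
              rw [mul_sub, mul_one, mul_div_cancel₀ _ (hus j).ne']
      have hne1 : u j₁ / us j₁ ≠ 1 := by
        intro h
        apply hj₁
        have h2 := (div_eq_iff (hus j₁).ne').mp h
        linarith
      have hlt : us j₁ * Real.log (u j₁ / us j₁) < u j₁ - us j₁ := by
        have hlog := Real.log_lt_sub_one_of_pos (hr j₁) hne1
        calc us j₁ * Real.log (u j₁ / us j₁) < us j₁ * (u j₁ / us j₁ - 1) :=
              (mul_lt_mul_iff_right₀ (hus j₁)).mpr hlog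
          _ = u j₁ - us j₁ := by
              rw [mul_sub, mul_one, mul_div_cancel₀ _ (hus j₁).ne']
      have hsum := Finset.sum_lt_sum hle ⟨j₁, Finset.mem_univ j₁, hlt⟩
      have hzero : ∑ j, (u j - us j) = 0 := by
        rw [Finset.sum_sub_distrib, hu1, hus1]; ring
      rw [hzero] at hsum
      exact hsum
    have heq : ∀ α : ℝ, ∏ j, (u j / us j) ^ (α * us j - 1) = Real.exp (α * L0 - S) := by
      intro α
      have h1 : ∀ j : Fin C, (u j / us j) ^ (α * us j - 1)
          = Real.exp (Real.log (u j / us j) * (α * us j - 1)) := fun j =>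
        Real.rpow_def_of_pos (hr j) _
      rw [Finset.prod_congr rfl fun j _ => h1 j, ← Real.exp_sum]
      congr 1
      have h2 : ∀ j : Fin C, Real.log (u j / us j) * (α * us j - 1)
          = α * (us j * Real.log (u j / us j)) - Real.log (u j / us j) := fun j => by ring
      rw [Finset.sum_congr rfl fun j _ => h2 j, Finset.sum_sub_distrib, ← Finset.mul_sum]
    have htends : Filter.Tendsto (fun α : ℝ => Real.exp (α * L0 - S)) Filter.atTop (nhds 0) := by
      apply Real.tendsto_exp_atBot.comp
      apply Filter.tendsto_atBot_add_const_right
      exact Filter.Tendsto.atTop_mul_const_of_neg hL0neg Filter.tendsto_id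
    exact htends.congr fun α => (heq α).symm
  · push_neg at hall
    obtain ⟨j₀, hj₀⟩ := hall
    have hj0 : u j₀ = 0 := le_antisymm hj₀ (hu0 j₀)
    have hev : ∀ᶠ α : ℝ in Filter.atTop, (0:ℝ) = ∏ j, (u j / us j) ^ (α * us j - 1) := by
      filter_upwards [Filter.eventually_gt_atTop (1 / us j₀)] with α hα
      symm
      apply Finset.prod_eq_zero (Finset.mem_univ j₀)
      rw [hj0, zero_div]
      apply Real.zero_rpow
      have : 1 < α * us j₀ := (div_lt_iff₀ (hus j₀)).mp hα
      linarith
    exact (tendsto_const_nhds.congr' hev)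


/-- if `U` and `U⋆` are joint distribution matrices with unequal
column-sum vectors, then the integral of the normalized Dirichlet-type density
`w^α = (1/C(α))·∏ x_{ij}^{α u⋆_{ij}−1}` over `sliceSet(U)` is at most
`∏_j (u_j/u⋆_j)^{α u⋆_j − 1}`, and this bound tends to `0` as `α → ∞`. -/
theorem dirichlet_density_slice_bound (U Ustar : Matrix (Fin C) (Fin C) ℝ)
    (hU : IsJointDist U) (hUstar : IsJointDist Ustar)
    (hpos : ∀ i j, 0 < Ustar i j)
    (hcols : (fun j => ∑ i, U i j) ≠ fun j => ∑ i, Ustar i j)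
    (Z : ℝ → ℝ) (hZpos : ∀ α, 0 < α → 0 < Z α)
    -- `Z α` is the normalizing constant: the density integrates to 1 over `sliceSet U⋆`
    (hZ : ∀ α, 0 < α →
      ∫⁻ v in sliceSet Ustar, ENNReal.ofReal ((Z α)⁻¹ * dirDensity Ustar α v)
          ∂(μH[(C * (C - 1) : ℕ)]) = 1) :
    (∀ α, 0 < α →
      ∫⁻ v in sliceSet U, ENNReal.ofReal ((Z α)⁻¹ * dirDensity Ustar α v)
          ∂(μH[(C * (C - 1) : ℕ)]) ≤
        ENNReal.ofReal
          (∏ j, ((∑ i, U i j) / (∑ i, Ustar i j)) ^ (α * (∑ i, Ustar i j) - 1))) ∧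
    Tendsto
      (fun α : ℝ =>
        ∏ j, ((∑ i, U i j) / (∑ i, Ustar i j)) ^ (α * (∑ i, Ustar i j) - 1))
      atTop (𝓝 0) := by
  have hC2 : 2 ≤ C := by
    by_contra hlt
    push_neg at hlt
    interval_cases C
    · exact hcols (funext fun j => j.elim0)
    · apply hcols
      funext j
      have hj : j = 0 := Fin.eq_zero j
      subst hj
      have e1 : ∑ i, U i 0 = 1 := by
        have h := hU.2
        simpa [Fin.sum_univ_one] using h
      have e2 : ∑ i, Ustar i 0 = 1 := by
        have h := hUstar.2
        simpa [Fin.sum_univ_one] using h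
      rw [e1, e2]
  have hC0 : 0 < C := by omega
  have huc1 : ∑ j, ∑ i, U i j = 1 := by rw [Finset.sum_comm]; exact hU.2
  have hus1 : ∑ j, ∑ i, Ustar i j = 1 := by rw [Finset.sum_comm]; exact hUstar.2
  have hus_pos : ∀ j, 0 < ∑ i, Ustar i j := fun j =>
    Finset.sum_pos (fun i _ => hpos i j) ⟨⟨0, hC0⟩, Finset.mem_univ _⟩
  have huc0 : ∀ j, 0 ≤ ∑ i, U i j := fun j => Finset.sum_nonneg fun i _ => hU.1 i j
  constructor
  · -- the integral bound
    intro α hα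
    set d : ℝ := ((C * (C - 1) : ℕ) : ℝ) with hd
    have hd0 : 0 ≤ d := Nat.cast_nonneg _
    set g : EmatX C → ℝ≥0∞ := fun v => ENNReal.ofReal ((Z α)⁻¹ * dirDensityX Ustar α v) with hg
    have hgm : Measurable g := measurable_gX Ustar α (Z α)⁻¹
    set pU : EmatX C := mkVX (fun q => (∑ i, U i q.2) / C) with hpU
    have hpUcol : ∀ j, ∑ i, entryX pU i j = ∑ i, U i j := by
      intro j
      rw [hpU]
      simp only [entryX_mkVX]
      rw [Finset.sum_const, Finset.card_univ, Fintype.card_fin, nsmul_eq_mul]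
      field_simp
    by_cases hucpos : ∀ j, 0 < ∑ i, U i j
    · -- main branch
      set c : Fin C → ℝ := fun j => (∑ i, Ustar i j) / (∑ i, U i j) with hc
      have hcpos : ∀ j, 0 < c j := fun j => div_pos (hus_pos j) (hucpos j)
      set r : Fin C → ℝ := fun j => (∑ i, U i j) / (∑ i, Ustar i j) with hr
      have hrpos : ∀ j, 0 < r j := fun j => div_pos (hucpos j) (hus_pos j)
      have hrc : ∀ j, r j * c j = 1 := by
        intro j
        rw [hr, hc, div_mul_div_comm, mul_comm (∑ i : Fin C, U i j) (∑ i : Fin C, Ustar i j),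
          div_self (mul_ne_zero (hus_pos j).ne' (hucpos j).ne')]
      have hcu : ∀ j, c j * (∑ i, U i j) = ∑ i, Ustar i j := fun j =>
        div_mul_cancel₀ _ (hucpos j).ne'
      have hru : ∀ j, r j * (∑ i, Ustar i j) = ∑ i, U i j := fun j =>
        div_mul_cancel₀ _ (hus_pos j).ne'
      set pS : EmatX C := mkVX (fun q => (∑ i, Ustar i q.2) / C) with hpS
      have hpScol : ∀ j, ∑ i, entryX pS i j = ∑ i, Ustar i j := by
        intro j
        rw [hpS]
        simp only [entryX_mkVX]
        rw [Finset.sum_const, Finset.card_univ, Fintype.card_fin, nsmul_eq_mul]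
        field_simp
      set W : Submodule ℝ (EmatX C) := VX C with hW
      have hsubU : sliceSetX U ⊆ Set.range (chartX W pU) := by
        intro v hv
        rw [range_chartX]
        show v - pU ∈ VX C
        rw [mem_VX]
        intro j
        simp only [entryX_sub]
        rw [Finset.sum_sub_distrib, hv.2.2 j, hpUcol j, sub_self]
      have hsubS : sliceSetX Ustar ⊆ Set.range (chartX W pS) := by
        intro v hv
        rw [range_chartX]
        show v - pS ∈ VX C
        rw [mem_VX]
        intro j
        simp only [entryX_sub]
        rw [Finset.sum_sub_distrib, hv.2.2 j, hpScol j, sub_self]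
      set SU : Set W := chartX W pU ⁻¹' sliceSetX U with hSU
      set SS : Set W := chartX W pS ⁻¹' sliceSetX Ustar with hSS
      have hSUm : MeasurableSet SU :=
        (measurableSet_sliceSetX U).preimage (chartX_continuous W pU).measurable
      have hSSm : MeasurableSet SS :=
        (measurableSet_sliceSetX Ustar).preimage (chartX_continuous W pS).measurable
      have hfr : finrank ℝ W = C * (C - 1) := finrank_VX hC0
      haveI hHaar : Measure.IsAddHaarMeasure (μH[d] : Measure W) := by
        have h := isAddHaarMeasure_hausdorffMeasure (E := W)
        rw [hfr] at h
        rw [hd]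
        exact h
      have hIU : (∫⁻ v in sliceSetX U, g v ∂μH[d])
          = ∫⁻ w in SU, g (chartX W pU w) ∂(μH[d] : Measure W) :=
        chartX_lintegral W pU hd0 hgm (measurableSet_sliceSetX U) hsubU
      have hIS : (∫⁻ v in sliceSetX Ustar, g v ∂μH[d])
          = ∫⁻ w in SS, g (chartX W pS w) ∂(μH[d] : Measure W) :=
        chartX_lintegral W pS hd0 hgm (measurableSet_sliceSetX Ustar) hsubS
      have hZ1 : (∫⁻ w in SS, g (chartX W pS w) ∂(μH[d] : Measure W)) = 1 := by
        rw [← hIS]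
        exact hZ α hα
      set Mlin : W →ₗ[ℝ] W := (colScaleX c).restrict (colScaleX_mem_VX c) with hM
      have hdet : LinearMap.det Mlin = ∏ j, c j ^ (C - 1) := det_colScaleX_restrict hC2 c
      have hdetpos : 0 < LinearMap.det Mlin := by
        rw [hdet]
        exact Finset.prod_pos fun j _ => pow_pos (hcpos j) _
      have hMm : Measurable (⇑Mlin) := Mlin.continuous_of_finiteDimensional.measurable
      have hscale_pt : colScaleX c pU = pS := by
        apply EmatX_ext
        intro i j
        rw [entryX_colScaleX, hpU, hpS]
        simp only [entryX_mkVX]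
        rw [hc, div_mul_div_comm, mul_comm (∑ i : Fin C, Ustar i (i, j).2) (∑ i : Fin C, U i (i, j).2),
          mul_div_mul_left _ _ (hucpos j).ne']
      have hchart_scale : ∀ w : W, chartX W pS (Mlin w) = colScaleX c (chartX W pU w) := by
        intro w
        show pS + (Mlin w : EmatX C) = colScaleX c (pU + (w : EmatX C))
        rw [map_add (colScaleX c), hscale_pt]
        rfl
      have hpre : ⇑Mlin ⁻¹' SS = SU := by
        ext w
        simp only [Set.mem_preimage, hSS, hSU]
        constructor
        · intro hmem
          show chartX W pU w ∈ sliceSetX U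
          have h1 : colScaleX c (chartX W pU w) ∈ sliceSetX Ustar := by
            rw [← hchart_scale w]; exact hmem
          have h2 := colScaleX_mem_sliceSetX (A := Ustar) (B := U) r
            (fun j => (hrpos j).le) hru hU.2 _ h1
          rw [colScaleX_colScaleX r c hrc] at h2
          exact h2
        · intro hmem
          show chartX W pS (Mlin w) ∈ sliceSetX Ustar
          rw [hchart_scale w]
          exact colScaleX_mem_sliceSetX (A := U) (B := Ustar) c
            (fun j => (hcpos j).le) hcu hUstar.2 _ hmem
      set k : ℝ := ∏ j, c j ^ (α * (∑ i, Ustar i j) - (C:ℝ)) with hk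
      have hkpos : 0 < k := Finset.prod_pos fun j _ => Real.rpow_pos_of_pos (hcpos j) _
      have hpoint : ∀ w ∈ SU, g (chartX W pU w)
          = ENNReal.ofReal k⁻¹ * g (chartX W pS (Mlin w)) := by
        intro w hw
        have hvslice : chartX W pU w ∈ sliceSetX U := hw
        have hv0 : ∀ i j, 0 ≤ entryX (chartX W pU w) i j := hvslice.1
        have hdd := dirDensityX_colScaleX Ustar α c hcpos _ hv0
        have heq2 : (Z α)⁻¹ * dirDensityX Ustar α (chartX W pU w)
            = k⁻¹ * ((Z α)⁻¹ * dirDensityX Ustar α (colScaleX c (chartX W pU w))) := by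
          rw [hdd]
          have hkk : (∏ j, c j ^ (α * (∑ i, Ustar i j) - (C:ℝ))) = k := rfl
          rw [hkk]
          field_simp
        rw [hchart_scale w]
        show ENNReal.ofReal ((Z α)⁻¹ * dirDensityX Ustar α (chartX W pU w))
            = ENNReal.ofReal k⁻¹
              * ENNReal.ofReal ((Z α)⁻¹ * dirDensityX Ustar α (colScaleX c (chartX W pU w)))
        rw [heq2, ENNReal.ofReal_mul (inv_nonneg.mpr hkpos.le)]
      show (∫⁻ v in sliceSetX U, g v ∂μH[d])
          ≤ ENNReal.ofReal (∏ j, r j ^ (α * (∑ i, Ustar i j) - 1))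
      rw [hIU, setLIntegral_congr_fun_ae hSUm (Filter.Eventually.of_forall hpoint),
        lintegral_const_mul' _ _ ENNReal.ofReal_ne_top]
      have hh : Measurable fun x : W => g (chartX W pS x) :=
        hgm.comp (chartX_continuous W pS).measurable
      have hmapM : Measure.map (⇑Mlin) (μH[d] : Measure W)
          = ENNReal.ofReal |(LinearMap.det Mlin)⁻¹| • (μH[d] : Measure W) :=
        Measure.map_linearMap_addHaar_eq_smul_addHaar _ hdetpos.ne'
      have hcv : (∫⁻ w in SU, g (chartX W pS (Mlin w)) ∂(μH[d] : Measure W))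
          = ENNReal.ofReal |(LinearMap.det Mlin)⁻¹|
            * ∫⁻ x in SS, g (chartX W pS x) ∂(μH[d] : Measure W) := by
        calc ∫⁻ w in SU, g (chartX W pS (Mlin w)) ∂(μH[d] : Measure W)
            = ∫⁻ x, g (chartX W pS x)
                ∂(Measure.map (⇑Mlin) (((μH[d] : Measure W)).restrict SU)) :=
              (lintegral_map hh hMm).symm
          _ = ∫⁻ x, g (chartX W pS x)
                ∂((Measure.map (⇑Mlin) (μH[d] : Measure W)).restrict SS) := by
              rw [Measure.restrict_map hMm hSSm, hpre]
          _ = ENNReal.ofReal |(LinearMap.det Mlin)⁻¹|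
                * ∫⁻ x in SS, g (chartX W pS x) ∂(μH[d] : Measure W) := by
              rw [hmapM, Measure.restrict_smul, lintegral_smul_measure, smul_eq_mul]
      rw [hcv, hZ1, mul_one, ← ENNReal.ofReal_mul (inv_nonneg.mpr hkpos.le)]
      apply le_of_eq
      apply congrArg ENNReal.ofReal
      rw [abs_of_pos (inv_pos.mpr hdetpos), hdet, hk]
      rw [← Finset.prod_inv_distrib, ← Finset.prod_inv_distrib, ← Finset.prod_mul_distrib]
      apply Finset.prod_congr rfl
      intro j _
      have hcj := hcpos j
      have hcast : ((C - 1 : ℕ) : ℝ) = (C:ℝ) - 1 := by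
        rw [Nat.cast_sub (by omega : (1:ℕ) ≤ C), Nat.cast_one]
      rw [← Real.rpow_natCast (c j) (C-1), hcast,
        ← Real.rpow_neg hcj.le, ← Real.rpow_neg hcj.le, ← Real.rpow_add hcj]
      have hrcj : r j = (c j)⁻¹ := by
        rw [hr, hc]
        exact (inv_div _ _).symm
      rw [hrcj, Real.inv_rpow hcj.le, ← Real.rpow_neg hcj.le]
      congr 1
      ring
    · -- degenerate branch : some column sum of U is zero
      push_neg at hucpos
      obtain ⟨j₀, hj₀le⟩ := hucpos
      have hj₀ : ∑ i, U i j₀ = 0 := le_antisymm hj₀le (huc0 j₀)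
      have hsub : sliceSetX U ⊆ Set.range (chartX (LinearMap.ker (JX C j₀)) pU) := by
        intro v hv
        rw [range_chartX]
        show v - pU ∈ LinearMap.ker (JX C j₀)
        rw [LinearMap.mem_ker]
        refine Prod.ext ?_ ?_
        · show LX C (v - pU) = 0
          funext j
          rw [LX_apply]
          simp only [entryX_sub]
          rw [Finset.sum_sub_distrib, hv.2.2 j, hpUcol j, sub_self]
          rfl
        · show rowProjX C j₀ (v - pU) = 0
          funext i
          rw [rowProjX_apply, entryX_sub]
          have h1 : entryX v i j₀ = 0 := by
            have hcol := hv.2.2 j₀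
            exact (Finset.sum_eq_zero_iff_of_nonneg (fun i _ => hv.1 i j₀)).mp
              (by rw [hcol, hj₀]) i (Finset.mem_univ i)
          have h2 : entryX pU i j₀ = 0 := by
            rw [hpU]
            simp only [entryX_mkVX]
            rw [hj₀, zero_div]
          rw [h1, h2, sub_zero]
          rfl
      have hzero : (μH[d] : Measure (LinearMap.ker (JX C j₀))) = 0 := by
        apply Real.hausdorffMeasure_of_finrank_lt
        rw [hd]
        exact_mod_cast finrank_ker_JX_lt hC2 j₀
      have h0 : (∫⁻ v in sliceSetX U, g v ∂μH[d]) = 0 := by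
        rw [chartX_lintegral (LinearMap.ker (JX C j₀)) pU hd0 hgm
          (measurableSet_sliceSetX U) hsub, hzero]
        simp
      exact le_trans (le_of_eq h0) (zero_le')
  · -- the tendsto part
    have hne : (fun j => ∑ i, U i j) ≠ fun j => ∑ i, Ustar i j := hcols
    exact tendsto_bound_aux (fun j => ∑ i, U i j) (fun j => ∑ i, Ustar i j)
      huc0 hus_pos huc1 hus1 hne


end
end
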